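/- Let Γ(G) be a graph product of nontrivial countable groups over a finite simple graph Γ and let v ∈ V(Γ). Then Γ(G) is canonically isomorphic to the amalgamated free product G₁ *_H G₂, where G₁ = Γ_{S_v ∪ {v}}(G), G₂ = Γ_{V(Γ)∖{v}}(G) and H = Γ_{S_v}(G); that is, the canonical homomorphism from the pushout of the inclusions H ↪ G₁ and H ↪ G₂ to Γ(G) is an isomorphism. -/

import Mathlib

open scoped Pointwise ComplexOrder

namespace PPx

universe u v w

/-- The set of commutation relators defining a graph product. -/
def graphProductRels {V : Type u} (Γ : SimpleGraph V) (Gv : V → Type v)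
    [∀ a, Group (Gv a)] : Set (Monoid.CoprodI Gv) :=
  {x | ∃ u w : V, Γ.Adj u w ∧ ∃ (g : Gv u) (h : Gv w),
    x = Monoid.CoprodI.of g * Monoid.CoprodI.of h *
        (Monoid.CoprodI.of g)⁻¹ * (Monoid.CoprodI.of h)⁻¹}

/-- The graph product `Γ(G)` of the family of groups `Gv` over the graph `Γ`. -/
def GraphProduct {V : Type u} (Γ : SimpleGraph V) (Gv : V → Type v)
    [∀ a, Group (Gv a)] : Type (max u v) :=
  Monoid.CoprodI Gv ⧸ Subgroup.normalClosure (graphProductRels Γ Gv)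

instance {V : Type u} (Γ : SimpleGraph V) (Gv : V → Type v) [∀ a, Group (Gv a)] :
    Group (GraphProduct Γ Gv) :=
  inferInstanceAs (Group (Monoid.CoprodI Gv ⧸ Subgroup.normalClosure (graphProductRels Γ Gv)))

/-- The graph distance between two vertices, valued in `ℕ∞` (`⊤` if not connected). -/
noncomputable def graphDist {V : Type u} (Γ : SimpleGraph V) (a b : V) : ℕ∞ :=
  ⨅ p : Γ.Walk a b, (p.length : ℕ∞)

/-- The radius of a graph, `r(Γ) = min_v max_w d(v,w)`, valued in `ℕ∞`. -/
noncomputable def graphRadius {V : Type u} (Γ : SimpleGraph V) : ℕ∞ :=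
  ⨅ a : V, ⨆ b : V, graphDist Γ a b


/-- The canonical homomorphism `G_a →* Γ(G)`. -/
def GraphProduct.of {V : Type u} (Γ : SimpleGraph V) (Gv : V → Type v)
    [∀ a, Group (Gv a)] (a : V) : Gv a →* GraphProduct Γ Gv :=
  (QuotientGroup.mk' (Subgroup.normalClosure (graphProductRels Γ Gv))).comp Monoid.CoprodI.of

/-- For `T ⊆ V(Γ)`, the subgroup `Γ_T(G)` of `Γ(G)` generated by the vertex groups `G_v`
with `v ∈ T`. -/
def GraphProduct.vertexSubgroup {V : Type u} (Γ : SimpleGraph V) (Gv : V → Type v)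
    [∀ a, Group (Gv a)] (T : Set V) : Subgroup (GraphProduct Γ Gv) :=
  ⨆ a ∈ T, (GraphProduct.of Γ Gv a).range


namespace GraphProduct

variable {V : Type u} (Γ : SimpleGraph V) (Gv : V → Type v) [∀ a, Group (Gv a)]

theorem of_range_le {T : Set V} {a : V} (ha : a ∈ T) :
    (of Γ Gv a).range ≤ vertexSubgroup Γ Gv T :=
  le_iSup₂ (f := fun a (_ : a ∈ T) => (of Γ Gv a).range) a ha

/-- The canonical homomorphism `G_a →* Γ_T(G)` when `a ∈ T`. -/
def into (T : Set V) (a : V) (ha : a ∈ T) : Gv a →* vertexSubgroup Γ Gv T :=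
  (Subgroup.inclusion (of_range_le Γ Gv ha)).comp (of Γ Gv a).rangeRestrict

theorem coe_into (T : Set V) (a : V) (ha : a ∈ T) (g : Gv a) :
    ((into Γ Gv T a ha g : vertexSubgroup Γ Gv T) : GraphProduct Γ Gv) = of Γ Gv a g := rfl

theorem of_comm {u w : V} (h : Γ.Adj u w) (g : Gv u) (hh : Gv w) :
    of Γ Gv u g * of Γ Gv w hh = of Γ Gv w hh * of Γ Gv u g := by
  have hm : (Monoid.CoprodI.of g * Monoid.CoprodI.of hh * (Monoid.CoprodI.of g)⁻¹ *
      (Monoid.CoprodI.of hh)⁻¹ : Monoid.CoprodI Gv) ∈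
      Subgroup.normalClosure (graphProductRels Γ Gv) :=
    Subgroup.subset_normalClosure ⟨u, w, h, g, hh, rfl⟩
  have h1 : of Γ Gv u g * of Γ Gv w hh * (of Γ Gv u g)⁻¹ * (of Γ Gv w hh)⁻¹ = 1 := by
    exact (QuotientGroup.eq_one_iff _).mpr hm
  exact (commutatorElement_eq_one_iff_commute.mp
    (by rw [commutatorElement_def]; exact h1)).eq

theorem into_comm {T : Set V} {a b : V} (ha : a ∈ T) (hb : b ∈ T) (hadj : Γ.Adj a b)
    (g : Gv a) (h : Gv b) :
    into Γ Gv T a ha g * into Γ Gv T b hb h = into Γ Gv T b hb h * into Γ Gv T a ha g :=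
  Subtype.ext (of_comm Γ Gv hadj g h)

theorem vertexSubgroup_eq_closure (T : Set V) :
    vertexSubgroup Γ Gv T =
      Subgroup.closure {x | ∃ a ∈ T, ∃ g : Gv a, of Γ Gv a g = x} := by
  apply le_antisymm
  · refine iSup₂_le fun a ha => ?_
    rintro x ⟨g, rfl⟩
    exact Subgroup.subset_closure ⟨a, ha, g, rfl⟩
  · rw [Subgroup.closure_le]
    rintro x ⟨a, ha, g, rfl⟩
    exact of_range_le Γ Gv ha ⟨g, rfl⟩

end GraphProduct

/-- `(G, j₁, j₂)` is the amalgamated free product `G₁ *_H G₂` of the injections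
`f₁ : H →* G₁` and `f₂ : H →* G₂`: the square commutes and `G` satisfies the universal
property of the pushout of `f₁` and `f₂`. -/
def IsAmalgamatedProduct {H G₁ G₂ G : Type*} [Group H] [Group G₁] [Group G₂] [Group G]
    (f₁ : H →* G₁) (f₂ : H →* G₂) (j₁ : G₁ →* G) (j₂ : G₂ →* G) : Prop :=
  j₁.comp f₁ = j₂.comp f₂ ∧
  ∀ (K : Type w) (_ : Group K) (k₁ : G₁ →* K) (k₂ : G₂ →* K),
    k₁.comp f₁ = k₂.comp f₂ → ∃! k : G →* K, k.comp j₁ = k₁ ∧ k.comp j₂ = k₂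

theorem isAmalgamatedProduct_graphProduct
    {V : Type u} [Fintype V] (Γ : SimpleGraph V) (Gv : V → Type v)
    [∀ a, Group (Gv a)] [∀ a, Nontrivial (Gv a)] [∀ a, Countable (Gv a)] (v : V)
    (h₁ : GraphProduct.vertexSubgroup Γ Gv (Γ.neighborSet v) ≤
      GraphProduct.vertexSubgroup Γ Gv (insert v (Γ.neighborSet v)))
    (h₂ : GraphProduct.vertexSubgroup Γ Gv (Γ.neighborSet v) ≤
      GraphProduct.vertexSubgroup Γ Gv {u : V | u ≠ v}) :
    IsAmalgamatedProduct (Subgroup.inclusion h₁) (Subgroup.inclusion h₂)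
      (GraphProduct.vertexSubgroup Γ Gv (insert v (Γ.neighborSet v))).subtype
      (GraphProduct.vertexSubgroup Γ Gv {u : V | u ≠ v}).subtype := by
  classical
  refine ⟨by rw [Subgroup.subtype_comp_inclusion, Subgroup.subtype_comp_inclusion], ?_⟩
  intro K _ k₁ k₂ hk
  -- membership helpers
  have memT₁v : v ∈ insert v (Γ.neighborSet v) := Set.mem_insert _ _
  have memT₁ : ∀ {a : V}, Γ.Adj v a → a ∈ insert v (Γ.neighborSet v) := fun h =>
    Set.mem_insert_of_mem _ h
  have memT₂ : ∀ {a : V}, a ≠ v → a ∈ {u : V | u ≠ v} := fun h => h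
  -- key compatibility along H
  have key : ∀ (a : V) (ha : Γ.Adj v a) (g : Gv a),
      k₂ (GraphProduct.into Γ Gv {u : V | u ≠ v} a (memT₂ ha.ne') g) =
      k₁ (GraphProduct.into Γ Gv (insert v (Γ.neighborSet v)) a (memT₁ ha) g) := by
    intro a ha g
    have e₂ : GraphProduct.into Γ Gv {u : V | u ≠ v} a (memT₂ ha.ne') g =
        Subgroup.inclusion h₂ (GraphProduct.into Γ Gv (Γ.neighborSet v) a ha g) :=
      Subtype.ext rfl
    have e₁ : GraphProduct.into Γ Gv (insert v (Γ.neighborSet v)) a (memT₁ ha) g =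
        Subgroup.inclusion h₁ (GraphProduct.into Γ Gv (Γ.neighborSet v) a ha g) :=
      Subtype.ext rfl
    rw [e₁, e₂]
    exact (DFunLike.congr_fun hk (GraphProduct.into Γ Gv (Γ.neighborSet v) a ha g)).symm
  -- the family of homomorphisms into K
  let φ : ∀ a, Gv a →* K := fun a =>
    if h : a = v then
      k₁.comp (GraphProduct.into Γ Gv (insert v (Γ.neighborSet v)) a
        (by rw [h]; exact memT₁v))
    else k₂.comp (GraphProduct.into Γ Gv {u : V | u ≠ v} a (memT₂ h))
  have φ_eq₁ : ∀ (a : V) (ha : a ∈ insert v (Γ.neighborSet v)) (g : Gv a),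
      φ a g = k₁ (GraphProduct.into Γ Gv (insert v (Γ.neighborSet v)) a ha g) := by
    intro a ha g
    by_cases h : a = v
    · simp only [φ, dif_pos h]; rfl
    · have hadj : Γ.Adj v a := ha.resolve_left h
      simp only [φ, dif_neg h]
      exact key a hadj g
  have φ_eq₂ : ∀ (a : V) (ha : a ∈ {u : V | u ≠ v}) (g : Gv a),
      φ a g = k₂ (GraphProduct.into Γ Gv {u : V | u ≠ v} a ha g) := by
    intro a ha g
    simp only [φ, dif_neg (show ¬ a = v from ha)]
    rfl
  -- commutation of the images of adjacent vertex groups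
  have φcomm : ∀ (u w : V), Γ.Adj u w → ∀ (g : Gv u) (h : Gv w),
      φ u g * φ w h = φ w h * φ u g := by
    intro u w hadj g h
    by_cases hu : u = v
    · have hau : u ∈ insert v (Γ.neighborSet v) := by rw [hu]; exact memT₁v
      have haw : w ∈ insert v (Γ.neighborSet v) := memT₁ (hu ▸ hadj)
      rw [φ_eq₁ u hau g, φ_eq₁ w haw h, ← map_mul, ← map_mul,
        GraphProduct.into_comm Γ Gv hau haw hadj]
    · by_cases hw : w = v
      · have haw : w ∈ insert v (Γ.neighborSet v) := by rw [hw]; exact memT₁v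
        have hau : u ∈ insert v (Γ.neighborSet v) := memT₁ (hw ▸ hadj.symm)
        rw [φ_eq₁ u hau g, φ_eq₁ w haw h, ← map_mul, ← map_mul,
          GraphProduct.into_comm Γ Gv hau haw hadj]
      · rw [φ_eq₂ u (memT₂ hu) g, φ_eq₂ w (memT₂ hw) h, ← map_mul, ← map_mul,
          GraphProduct.into_comm Γ Gv (memT₂ hu) (memT₂ hw) hadj]
  let Φ : Monoid.CoprodI Gv →* K := Monoid.CoprodI.lift φ
  have hΦ : Subgroup.normalClosure (graphProductRels Γ Gv) ≤ Φ.ker := by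
    apply Subgroup.normalClosure_le_normal
    rintro x ⟨u, w, hadj, g, h, rfl⟩
    have : Φ (Monoid.CoprodI.of g * Monoid.CoprodI.of h * (Monoid.CoprodI.of g)⁻¹ *
        (Monoid.CoprodI.of h)⁻¹) = 1 := by
      simp only [map_mul, map_inv, Monoid.CoprodI.lift_of, Φ]
      rw [φcomm u w hadj g h]
      group
    exact this
  let k : GraphProduct Γ Gv →* K := QuotientGroup.lift _ Φ hΦ
  have hk_of : ∀ (a : V) (g : Gv a), k (GraphProduct.of Γ Gv a g) = φ a g := by
    intro a g
    show QuotientGroup.lift _ Φ hΦ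
      (QuotientGroup.mk (Monoid.CoprodI.of g)) = φ a g
    rw [QuotientGroup.lift_mk']
    exact Monoid.CoprodI.lift_of φ g
  -- agreement on the two vertex subgroups
  have main₁ : ∀ x (hx : x ∈ GraphProduct.vertexSubgroup Γ Gv (insert v (Γ.neighborSet v))),
      k x = k₁ ⟨x, hx⟩ := by
    have hEq := GraphProduct.vertexSubgroup_eq_closure Γ Gv (insert v (Γ.neighborSet v))
    intro x hx
    have hx' : x ∈ Subgroup.closure
        {x | ∃ a ∈ insert v (Γ.neighborSet v), ∃ g : Gv a, GraphProduct.of Γ Gv a g = x} := by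
      rw [← hEq]; exact hx
    refine Subgroup.closure_induction
      (p := fun x _ => ∀ hm : x ∈ GraphProduct.vertexSubgroup Γ Gv (insert v (Γ.neighborSet v)),
        k x = k₁ ⟨x, hm⟩)
      ?_ ?_ ?_ ?_ hx' hx
    · rintro _ ⟨a, ha, g, rfl⟩ hm
      rw [hk_of, φ_eq₁ a ha g]
      congr 1
    · intro hm
      have h1 : (⟨(1 : GraphProduct Γ Gv), hm⟩ :
          GraphProduct.vertexSubgroup Γ Gv (insert v (Γ.neighborSet v))) = 1 := Subtype.ext rfl
      rw [h1, map_one, map_one]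
    · intro x y hxc hyc ihx ihy hm
      have hxm : x ∈ GraphProduct.vertexSubgroup Γ Gv (insert v (Γ.neighborSet v)) := by
        rw [hEq]; exact hxc
      have hym : y ∈ GraphProduct.vertexSubgroup Γ Gv (insert v (Γ.neighborSet v)) := by
        rw [hEq]; exact hyc
      have hmul : (⟨x * y, hm⟩ :
          GraphProduct.vertexSubgroup Γ Gv (insert v (Γ.neighborSet v))) = ⟨x, hxm⟩ * ⟨y, hym⟩ :=
        Subtype.ext rfl
      rw [map_mul, ihx hxm, ihy hym, hmul, map_mul]
    · intro x hxc ihx hm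
      have hxm : x ∈ GraphProduct.vertexSubgroup Γ Gv (insert v (Γ.neighborSet v)) := by
        rw [hEq]; exact hxc
      have hinv : (⟨x⁻¹, hm⟩ :
          GraphProduct.vertexSubgroup Γ Gv (insert v (Γ.neighborSet v))) = (⟨x, hxm⟩)⁻¹ :=
        Subtype.ext rfl
      rw [map_inv, ihx hxm, hinv, map_inv]
  have main₂ : ∀ x (hx : x ∈ GraphProduct.vertexSubgroup Γ Gv {u : V | u ≠ v}),
      k x = k₂ ⟨x, hx⟩ := by
    have hEq := GraphProduct.vertexSubgroup_eq_closure Γ Gv {u : V | u ≠ v}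
    intro x hx
    have hx' : x ∈ Subgroup.closure
        {x | ∃ a ∈ {u : V | u ≠ v}, ∃ g : Gv a, GraphProduct.of Γ Gv a g = x} := by
      rw [← hEq]; exact hx
    refine Subgroup.closure_induction
      (p := fun x _ => ∀ hm : x ∈ GraphProduct.vertexSubgroup Γ Gv {u : V | u ≠ v},
        k x = k₂ ⟨x, hm⟩)
      ?_ ?_ ?_ ?_ hx' hx
    · rintro _ ⟨a, ha, g, rfl⟩ hm
      rw [hk_of, φ_eq₂ a ha g]
      congr 1
    · intro hm
      have h1 : (⟨(1 : GraphProduct Γ Gv), hm⟩ :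
          GraphProduct.vertexSubgroup Γ Gv {u : V | u ≠ v}) = 1 := Subtype.ext rfl
      rw [h1, map_one, map_one]
    · intro x y hxc hyc ihx ihy hm
      have hxm : x ∈ GraphProduct.vertexSubgroup Γ Gv {u : V | u ≠ v} := by rw [hEq]; exact hxc
      have hym : y ∈ GraphProduct.vertexSubgroup Γ Gv {u : V | u ≠ v} := by rw [hEq]; exact hyc
      have hmul : (⟨x * y, hm⟩ :
          GraphProduct.vertexSubgroup Γ Gv {u : V | u ≠ v}) = ⟨x, hxm⟩ * ⟨y, hym⟩ :=
        Subtype.ext rfl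
      rw [map_mul, ihx hxm, ihy hym, hmul, map_mul]
    · intro x hxc ihx hm
      have hxm : x ∈ GraphProduct.vertexSubgroup Γ Gv {u : V | u ≠ v} := by rw [hEq]; exact hxc
      have hinv : (⟨x⁻¹, hm⟩ :
          GraphProduct.vertexSubgroup Γ Gv {u : V | u ≠ v}) = (⟨x, hxm⟩)⁻¹ :=
        Subtype.ext rfl
      rw [map_inv, ihx hxm, hinv, map_inv]
  have hc₁ : k.comp (GraphProduct.vertexSubgroup Γ Gv (insert v (Γ.neighborSet v))).subtype = k₁ :=
    MonoidHom.ext fun x => main₁ x x.2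
  have hc₂ : k.comp (GraphProduct.vertexSubgroup Γ Gv {u : V | u ≠ v}).subtype = k₂ :=
    MonoidHom.ext fun x => main₂ x x.2
  refine ⟨k, ⟨hc₁, hc₂⟩, ?_⟩
  rintro k' ⟨hk'₁, hk'₂⟩
  apply QuotientGroup.monoidHom_ext
  apply Monoid.CoprodI.ext_hom
  intro a
  ext g
  show k' (GraphProduct.of Γ Gv a g) = k (GraphProduct.of Γ Gv a g)
  by_cases h : a = v
  · have ha : a ∈ insert v (Γ.neighborSet v) := by rw [h]; exact memT₁v
    have e : GraphProduct.of Γ Gv a g =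
        (GraphProduct.vertexSubgroup Γ Gv (insert v (Γ.neighborSet v))).subtype
          (GraphProduct.into Γ Gv (insert v (Γ.neighborSet v)) a ha g) := rfl
    rw [e, ← MonoidHom.comp_apply k', ← MonoidHom.comp_apply k, hk'₁, hc₁]
  · have ha : a ∈ {u : V | u ≠ v} := memT₂ h
    have e : GraphProduct.of Γ Gv a g =
        (GraphProduct.vertexSubgroup Γ Gv {u : V | u ≠ v}).subtype
          (GraphProduct.into Γ Gv {u : V | u ≠ v} a ha g) := rfl
    rw [e, ← MonoidHom.comp_apply k', ← MonoidHom.comp_apply k, hk'₂, hc₂]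

end PPx
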